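/- Let A and B be square matrices with nonnegative integer entries such that tr(A) = 0 and tr(A²) = 0. Then for every strong shift equivalence over ℕ from A to B, given by elementary strong shift equivalences (R₁,S₁), …, (R_k,S_k), the sum Σ_{i=1}^{k} sgc₂(Rᵢ,Sᵢ) equals 0 in ℤ/2ℤ. -/

import Mathlib

/-- The sign-gyration polynomial `sgc₂` of a pair `(R, S)` of rectangular
integer matrices, with values in `ℤ/2ℤ`. -/
def sgc2 {n p : ℕ} (R : Matrix (Fin n) (Fin p) ℤ) (S : Matrix (Fin p) (Fin n) ℤ) : ZMod 2 :=
  (((∑ i : Fin n, ∑ j : Fin n, ∑ k : Fin p, ∑ l : Fin p,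
      if i < j ∧ l < k then R i k * S k i * R j l * S l j else 0)
    + (∑ i : Fin n, ∑ j : Fin n, ∑ k : Fin p, ∑ l : Fin p,
      if i < j ∧ l ≤ k then R i k * S k j * R j l * S l i else 0)
    + (∑ i : Fin n, ∑ k : Fin p, (R i k * (R i k - 1)) / 2 * (S k i) ^ 2) : ℤ) : ZMod 2)

/-- A strong shift equivalence (chain of elementary strong shift equivalences)
over a semiring `Λ`, consisting of `k` elementary steps. -/
structure SSEChain (Λ : Type) [Semiring Λ] (k : ℕ) where
  size : Fin (k + 1) → ℕ
  mat : ∀ i : Fin (k + 1), Matrix (Fin (size i)) (Fin (size i)) Λ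
  R : ∀ i : Fin k, Matrix (Fin (size i.castSucc)) (Fin (size i.succ)) Λ
  S : ∀ i : Fin k, Matrix (Fin (size i.succ)) (Fin (size i.castSucc)) Λ
  hR : ∀ i : Fin k, mat i.castSucc = R i * S i
  hS : ∀ i : Fin k, mat i.succ = S i * R i

/-- The chain `c` is a strong shift equivalence from `A` to `B`. -/
def SSEChain.From {Λ : Type} [Semiring Λ] {k n m : ℕ} (c : SSEChain Λ k)
    (A : Matrix (Fin n) (Fin n) Λ) (B : Matrix (Fin m) (Fin m) Λ) : Prop :=
  ∃ (h0 : c.size 0 = n) (h1 : c.size (Fin.last k) = m),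
    Matrix.reindex (finCongr h0) (finCongr h0) (c.mat 0) = A ∧
    Matrix.reindex (finCongr h1) (finCongr h1) (c.mat (Fin.last k)) = B

/-- Over `ℕ`, zero trace forces all elementary products `R i k * S k i` to vanish. -/
lemma entry_prod_eq_zero {n p : ℕ} (R : Matrix (Fin n) (Fin p) ℕ) (S : Matrix (Fin p) (Fin n) ℕ)
    (h : Matrix.trace (R * S) = 0) : ∀ i k, R i k * S k i = 0 := by
  intro i k
  have hdiag : (R * S) i i = 0 := by
    have := (Finset.sum_eq_zero_iff.mp h) i (Finset.mem_univ i)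
    simpa [Matrix.diag] using this
  have : ∑ k', R i k' * S k' i = 0 := by
    simpa [Matrix.mul_apply] using hdiag
  exact (Finset.sum_eq_zero_iff.mp this) k (Finset.mem_univ k)

lemma entry_prod4_eq_zero {n p : ℕ} (R : Matrix (Fin n) (Fin p) ℕ) (S : Matrix (Fin p) (Fin n) ℕ)
    (h : Matrix.trace ((R * S) ^ 2) = 0) :
    ∀ i j k l, (R i k * S k j) * (R j l * S l i) = 0 := by
  intro i j k l
  have hsq : ∀ i', ((R * S) * (R * S)) i' i' = 0 := by
    intro i'
    have := (Finset.sum_eq_zero_iff.mp h) i' (Finset.mem_univ i')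
    simpa [Matrix.diag, pow_two] using this
  have hij : (R * S) i j * (R * S) j i = 0 := by
    have : ∑ j', (R * S) i j' * (R * S) j' i = 0 := by
      simpa [Matrix.mul_apply] using hsq i
    exact (Finset.sum_eq_zero_iff.mp this) j (Finset.mem_univ j)
  rcases Nat.mul_eq_zero.mp hij with hz | hz
  · have : ∑ k', R i k' * S k' j = 0 := by simpa [Matrix.mul_apply] using hz
    have := (Finset.sum_eq_zero_iff.mp this) k (Finset.mem_univ k)
    rw [this, zero_mul]
  · have : ∑ l', R j l' * S l' i = 0 := by simpa [Matrix.mul_apply] using hz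
    have := (Finset.sum_eq_zero_iff.mp this) l (Finset.mem_univ l)
    rw [this, mul_zero]

/-- The key vanishing: a single elementary SSE step with zero trace and zero
trace of the square has vanishing `sgc₂`. -/
lemma sgc2_step_zero {n p : ℕ} (R : Matrix (Fin n) (Fin p) ℕ) (S : Matrix (Fin p) (Fin n) ℕ)
    (h1 : Matrix.trace (R * S) = 0) (h2 : Matrix.trace ((R * S) ^ 2) = 0) :
    sgc2 (R.map (Nat.cast : ℕ → ℤ)) (S.map (Nat.cast : ℕ → ℤ)) = 0 := by
  have hp := entry_prod_eq_zero R S h1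
  have hp4 := entry_prod4_eq_zero R S h2
  unfold sgc2
  have e1 : (∑ i : Fin n, ∑ j : Fin n, ∑ k : Fin p, ∑ l : Fin p,
      if i < j ∧ l < k then (R.map (Nat.cast : ℕ → ℤ)) i k * (S.map Nat.cast) k i *
        (R.map Nat.cast) j l * (S.map Nat.cast) l j else 0) = 0 := by
    refine Finset.sum_eq_zero fun i _ => Finset.sum_eq_zero fun j _ =>
      Finset.sum_eq_zero fun k _ => Finset.sum_eq_zero fun l _ => ?_
    rcases Nat.mul_eq_zero.mp (hp i k) with hz | hz <;>
      simp [Matrix.map_apply, hz]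
  have e2 : (∑ i : Fin n, ∑ j : Fin n, ∑ k : Fin p, ∑ l : Fin p,
      if i < j ∧ l ≤ k then (R.map (Nat.cast : ℕ → ℤ)) i k * (S.map Nat.cast) k j *
        (R.map Nat.cast) j l * (S.map Nat.cast) l i else 0) = 0 := by
    refine Finset.sum_eq_zero fun i _ => Finset.sum_eq_zero fun j _ =>
      Finset.sum_eq_zero fun k _ => Finset.sum_eq_zero fun l _ => ?_
    rcases Nat.mul_eq_zero.mp (hp4 i j k l) with hz | hz <;>
      rcases Nat.mul_eq_zero.mp hz with hz' | hz' <;>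
      simp [Matrix.map_apply, hz']
  have e3 : (∑ i : Fin n, ∑ k : Fin p,
      ((R.map (Nat.cast : ℕ → ℤ)) i k * ((R.map Nat.cast) i k - 1)) / 2 *
        ((S.map Nat.cast) k i) ^ 2) = 0 := by
    refine Finset.sum_eq_zero fun i _ => Finset.sum_eq_zero fun k _ => ?_
    rcases Nat.mul_eq_zero.mp (hp i k) with hz | hz <;>
      simp [Matrix.map_apply, hz]
  rw [e1, e2, e3]
  simp

lemma trace_submatrix_equiv' {m n R : Type*} [Fintype m] [Fintype n] [AddCommMonoid R]
    (e : m ≃ n) (M : Matrix n n R) : Matrix.trace (M.submatrix e e) = Matrix.trace M := by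
  unfold Matrix.trace Matrix.diag
  exact Fintype.sum_equiv e _ _ (fun i => rfl)

/-- Trace and trace of the square are invariant along an SSE chain. -/
lemma trace_chain_invariant {k : ℕ} (c : SSEChain ℕ k) :
    ∀ i : Fin (k + 1), Matrix.trace (c.mat i) = Matrix.trace (c.mat 0) ∧
      Matrix.trace ((c.mat i) ^ 2) = Matrix.trace ((c.mat 0) ^ 2) := by
  intro i
  induction i using Fin.induction with
  | zero => exact ⟨rfl, rfl⟩
  | succ i ih =>
    rcases ih with ⟨ht, ht2⟩
    constructor
    · rw [c.hS i, ← ht, c.hR i, Matrix.trace_mul_comm]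
    · rw [c.hS i, ← ht2, c.hR i]
      have h1 : (c.S i * c.R i) ^ 2 = c.S i * ((c.R i * c.S i) * c.R i) := by
        rw [pow_two, Matrix.mul_assoc, Matrix.mul_assoc]
      have h2 : (c.R i * c.S i) ^ 2 = ((c.R i * c.S i) * c.R i) * c.S i := by
        rw [pow_two, ← Matrix.mul_assoc]
      rw [h1, h2, Matrix.trace_mul_comm]

/-- If `A`, `B` are nonnegative integer matrices with `tr(A) = tr(A²) = 0`, then
for every strong shift equivalence over `ℕ` from `A` to `B`, the sum of the
`sgc₂` of the elementary steps vanishes. -/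
theorem sum_sgc2_eq_zero_of_SSE_over_N {n m : ℕ}
    (A : Matrix (Fin n) (Fin n) ℕ) (B : Matrix (Fin m) (Fin m) ℕ)
    (htr : Matrix.trace A = 0) (htr2 : Matrix.trace (A ^ 2) = 0)
    (k : ℕ) (c : SSEChain ℕ k) (hc : c.From A B) :
    ∑ i : Fin k, sgc2 ((c.R i).map (Nat.cast : ℕ → ℤ)) ((c.S i).map (Nat.cast : ℕ → ℤ)) = 0 := by
  obtain ⟨h0, h1, hA, hB⟩ := hc
  -- trace conditions hold for c.mat 0
  have hm0 : Matrix.trace (c.mat 0) = 0 := by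
    rw [← hA, Matrix.reindex_apply, trace_submatrix_equiv'] at htr
    exact htr
  have hm02 : Matrix.trace ((c.mat 0) ^ 2) = 0 := by
    have hsq : (Matrix.reindex (finCongr h0) (finCongr h0) (c.mat 0)) ^ 2 =
        Matrix.reindex (finCongr h0) (finCongr h0) ((c.mat 0) ^ 2) := by
      simp only [Matrix.reindex_apply, pow_two]
      rw [Matrix.submatrix_mul_equiv]
    rw [← hA, hsq, Matrix.reindex_apply, trace_submatrix_equiv'] at htr2
    exact htr2
  refine Finset.sum_eq_zero fun i _ => ?_
  have hinv := trace_chain_invariant c i.castSucc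
  apply sgc2_step_zero
  · rw [← c.hR i, hinv.1, hm0]
  · rw [← c.hR i, hinv.2, hm02]
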